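/- Let K be a field, n ≥ 1, m ≥ 2, and A_α ∈ M_n(K), b_α ∈ K^n for α ∈ {1,…,m} with A_α A_β = A_β A_α and (I_n − A_α)b_β = (I_n − A_β)b_α for all α, β ∈ {1,…,m}. Let (t₀,x₀) ∈ ℤ^m × K^n. Then the unique solution x : {t ∈ ℤ^m : t ≥ t₀} → K^n of x(t+1_α) = A_α x(t) + b_α (for all t ≥ t₀ and all α) with x(t₀) = x₀ is x(t) = (Π_{α=1}^{m} A_α^{t^α − t₀^α}) x₀ + S(t¹−t₀¹; A₁) b₁ + Σ_{β=2}^{m} (Π_{α=1}^{β−1} A_α^{t^α − t₀^α}) · S(t^β − t₀^β; A_β) b_β for all t ≥ t₀, where S(k;A) = I_n + A + … + A^{k−1} for k ≥ 1 and S(0;A) = 0. -/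

import Mathlib

/-- The geometric sum `S(k; A) = 1 + A + … + A^(k-1)`, with `S(0; A) = 0`. -/
def Sgeom {n : ℕ} {K : Type*} [Field K]
    (k : ℕ) (A : Matrix (Fin n) (Fin n) K) : Matrix (Fin n) (Fin n) K :=
  ∑ i ∈ Finset.range k, A ^ i

namespace AffineRecAux

variable {m n : ℕ} {K : Type*} [Field K]

lemma Sgeom_succ (k : ℕ) (A : Matrix (Fin n) (Fin n) K) :
    Sgeom (k + 1) A = A * Sgeom k A + 1 := by
  unfold Sgeom
  rw [Finset.sum_range_succ', Finset.mul_sum]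
  simp [pow_succ']

lemma Sgeom_mul_one_sub (k : ℕ) (A : Matrix (Fin n) (Fin n) K) :
    Sgeom k A * (1 - A) = 1 - A ^ k := by
  have h := geom_sum_mul A k
  rw [mul_sub, mul_one] at h
  show Sgeom k A * (1 - A) = _
  rw [mul_sub, mul_one]
  unfold Sgeom
  rw [← neg_sub, h, neg_sub]

/-- Partial products indexed by naturals. -/
def Pn (A : Fin m → Matrix (Fin n) (Fin n) K) (s : Fin m → ℕ) (k : ℕ) :
    Matrix (Fin n) (Fin n) K :=
  ((List.range k).map (fun i => if h : i < m then A ⟨i, h⟩ ^ s ⟨i, h⟩ else 1)).prod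

lemma Pn_zero_exp (A : Fin m → Matrix (Fin n) (Fin n) K) (k : ℕ) :
    Pn A (fun _ => 0) k = 1 := by
  unfold Pn
  apply List.prod_eq_one
  intro x hx
  simp only [List.mem_map] at hx
  obtain ⟨i, _, rfl⟩ := hx
  split <;> simp

lemma Pn_succ (A : Fin m → Matrix (Fin n) (Fin n) K) (s : Fin m → ℕ) (k : ℕ) :
    Pn A s (k + 1) = Pn A s k * (if h : k < m then A ⟨k, h⟩ ^ s ⟨k, h⟩ else 1) := by
  unfold Pn
  rw [List.range_succ, List.map_append, List.prod_append]
  simp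

lemma filter_range_lt : ∀ (M k : ℕ), k ≤ M →
    (List.range M).filter (fun i => decide (i < k)) = List.range k := by
  intro M
  induction M with
  | zero => intro k hk; interval_cases k; simp
  | succ M ih =>
    intro k hk
    rcases Nat.lt_or_ge M k with h | h
    · have : k = M + 1 := by omega
      subst this
      rw [List.filter_eq_self.mpr]
      intro a ha
      simp only [List.mem_range] at ha
      simpa using ha
    · rw [List.range_succ, List.filter_append, ih k h]
      have : ¬ M < k := by omega
      simp [this]


lemma map_coe_finRange' (k : ℕ) : (List.finRange k).map Fin.val = List.range k :=
  List.ext_getElem (by simp) (by simp)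

lemma Pn_full (A : Fin m → Matrix (Fin n) (Fin n) K) (u : Fin m → ℕ) :
    ((List.finRange m).map (fun α : Fin m => A α ^ u α)).prod = Pn A u m := by
  unfold Pn
  rw [← map_coe_finRange', List.map_map]
  refine congrArg List.prod (List.map_congr_left ?_)
  intro α _
  simp [Function.comp, α.isLt]

lemma Pn_filter (A : Fin m → Matrix (Fin n) (Fin n) K) (u : Fin m → ℕ) (β : Fin m) :
    (((List.finRange m).filter (fun α : Fin m => α < β)).map
        (fun α : Fin m => A α ^ u α)).prod = Pn A u β.val := by
  unfold Pn
  have h1 : ((List.finRange m).filter (fun α : Fin m => α < β)).map Fin.val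
      = List.range β.val := by
    have h2 : (List.finRange m).filter (fun α : Fin m => α < β)
        = (List.finRange m).filter ((fun i => decide (i < β.val)) ∘ Fin.val) := by
      apply List.filter_congr
      intro x _
      exact decide_eq_decide.mpr Fin.lt_def
    rw [h2, ← List.filter_map, map_coe_finRange',
      filter_range_lt m β.val (le_of_lt β.isLt)]
  calc (((List.finRange m).filter (fun α : Fin m => α < β)).map
        (fun α : Fin m => A α ^ u α)).prod
      = ((((List.finRange m).filter (fun α : Fin m => α < β)).map Fin.val).map
          (fun i => if h : i < m then A ⟨i, h⟩ ^ u ⟨i, h⟩ else 1)).prod := by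
        rw [List.map_map]
        refine congrArg List.prod (List.map_congr_left ?_)
        intro α _
        simp [Function.comp, α.isLt]
    _ = _ := by rw [h1]

variable {A : Fin m → Matrix (Fin n) (Fin n) K} {b : Fin m → Fin n → K}
  (hcomm : ∀ α β : Fin m, A α * A β = A β * A α)
  (hcompat : ∀ α β : Fin m,
      ((1 : Matrix (Fin n) (Fin n) K) - A α).mulVec (b β)
        = ((1 : Matrix (Fin n) (Fin n) K) - A β).mulVec (b α))

include hcomm in
lemma commute_Pn (γ : Fin m) (s : Fin m → ℕ) (k : ℕ) :
    Commute (A γ) (Pn A s k) := by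
  apply Commute.list_prod_right
  intro x hx
  simp only [List.mem_map] at hx
  obtain ⟨i, _, rfl⟩ := hx
  split
  · exact Commute.pow_right (hcomm γ _) _
  · exact Commute.one_right _

include hcomm in
lemma commute_Sgeom (γ β : Fin m) (k : ℕ) :
    Commute (A γ) (Sgeom k (A β)) := by
  apply Commute.sum_right
  intro i _
  exact Commute.pow_right (hcomm γ β) _

include hcomm in
lemma Pn_update (s : Fin m → ℕ) (α : Fin m) :
    ∀ k, Pn A (Function.update s α (s α + 1)) k
      = if α.val < k then A α * Pn A s k else Pn A s k := by
  intro k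
  induction k with
  | zero => simp [Pn]
  | succ k ih =>
    rw [Pn_succ, Pn_succ, ih]
    rcases lt_trichotomy k α.val with h | h | h
    · have h1 : ¬ α.val < k := by omega
      have h2 : ¬ α.val < k + 1 := by omega
      rw [if_neg h1, if_neg h2]
      congr 1
      split
      · next hk =>
        have : (⟨k, hk⟩ : Fin m) ≠ α := Fin.ne_of_val_ne (by simp; omega)
        rw [Function.update_of_ne this]
      · rfl
    · have hk : k < m := h ▸ α.isLt
      have h1 : ¬ α.val < k := by omega
      have h2 : α.val < k + 1 := by omega
      have he : (⟨k, hk⟩ : Fin m) = α := Fin.eq_of_val_eq (by simp; omega)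
      rw [if_neg h1, if_pos h2, dif_pos hk, dif_pos hk, he, Function.update_self, pow_succ]
      have c1 : Commute (A α) (Pn A s k) := commute_Pn hcomm α s k
      have c2 : Commute (A α) (A α ^ s α) := Commute.pow_right rfl _
      calc Pn A s k * (A α ^ s α * A α)
          = Pn A s k * (A α * A α ^ s α) := by rw [c2.eq]
        _ = (Pn A s k * A α) * A α ^ s α := by rw [mul_assoc]
        _ = (A α * Pn A s k) * A α ^ s α := by rw [c1.eq]
        _ = A α * (Pn A s k * A α ^ s α) := by rw [mul_assoc]
    · have h1 : α.val < k := h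
      have h2 : α.val < k + 1 := by omega
      rw [if_pos h1, if_pos h2, mul_assoc]
      congr 2
      split
      · next hk =>
        have : (⟨k, hk⟩ : Fin m) ≠ α := Fin.ne_of_val_ne (by simp; omega)
        rw [Function.update_of_ne this]
      · rfl


lemma sum_mulVec {ι : Type*} (s : Finset ι) (f : ι → Matrix (Fin n) (Fin n) K)
    (v : Fin n → K) : (∑ i ∈ s, f i).mulVec v = ∑ i ∈ s, (f i).mulVec v := by
  induction s using Finset.cons_induction with
  | empty => simp [Matrix.zero_mulVec]
  | cons a s h ih => simp [Finset.sum_cons, Matrix.add_mulVec, ih]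

lemma mulVec_sum {ι : Type*} (s : Finset ι) (M : Matrix (Fin n) (Fin n) K)
    (f : ι → Fin n → K) : M.mulVec (∑ i ∈ s, f i) = ∑ i ∈ s, M.mulVec (f i) := by
  induction s using Finset.cons_induction with
  | empty => simp
  | cons a s h ih => simp [Finset.sum_cons, Matrix.mulVec_add, ih]

/-- The candidate solution, as a function of the vector of exponents. -/
def Gsol (A : Fin m → Matrix (Fin n) (Fin n) K) (b : Fin m → Fin n → K)
    (x₀ : Fin n → K) (s : Fin m → ℕ) : Fin n → K :=
  (Pn A s m).mulVec x₀ + ∑ β : Fin m, ((Pn A s β.val) * Sgeom (s β) (A β)).mulVec (b β)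

lemma Gsol_zero (A : Fin m → Matrix (Fin n) (Fin n) K) (b : Fin m → Fin n → K)
    (x₀ : Fin n → K) : Gsol A b x₀ (fun _ => 0) = x₀ := by
  unfold Gsol
  rw [Pn_zero_exp, Matrix.one_mulVec]
  have h : ∀ β : Fin m, ((Pn A (fun _ => 0) β.val) * Sgeom 0 (A β)).mulVec (b β) = 0 := by
    intro β
    unfold Sgeom
    simp [Matrix.zero_mulVec]
  rw [Finset.sum_congr rfl (fun β _ => h β)]
  simp


include hcomm hcompat in
lemma Gsol_step (x₀ : Fin n → K) (s : Fin m → ℕ) (α : Fin m) :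
    Gsol A b x₀ (Function.update s α (s α + 1))
      = (A α).mulVec (Gsol A b x₀ s) + b α := by
  set s' := Function.update s α (s α + 1) with hs'
  set W : Fin m → Matrix (Fin n) (Fin n) K := fun β =>
    if β.val < α.val then Pn A s β.val - Pn A s (β.val + 1)
    else if β = α then Pn A s α.val else 0 with hW
  have hD : ∀ β : Fin m,
      ((Pn A s' β.val) * Sgeom (s' β) (A β)).mulVec (b β)
        - (A α).mulVec (((Pn A s β.val) * Sgeom (s β) (A β)).mulVec (b β))
      = (W β).mulVec (b α) := by
    intro β
    rcases lt_trichotomy β.val α.val with h | h | h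
    · -- β < α : the compatibility case
      have hβm : β.val < m := β.isLt
      have hP : Pn A s' β.val = Pn A s β.val := by
        rw [hs', Pn_update hcomm s α β.val, if_neg (by omega)]
      have hsβ : s' β = s β := Function.update_of_ne (Fin.ne_of_val_ne (by omega)) _ _
      have hWβ : W β = Pn A s β.val - Pn A s (β.val + 1) := by
        simp only [hW, if_pos h]
      rw [hWβ]
      have cPS : Commute (A α) (Pn A s β.val * Sgeom (s β) (A β)) :=
        Commute.mul_right (commute_Pn hcomm α s β.val) (commute_Sgeom hcomm α β (s β))
      calc ((Pn A s' β.val) * Sgeom (s' β) (A β)).mulVec (b β)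
            - (A α).mulVec (((Pn A s β.val) * Sgeom (s β) (A β)).mulVec (b β))
          = ((Pn A s β.val * Sgeom (s β) (A β)) * (1 - A α)).mulVec (b β) := by
            rw [hP, hsβ, Matrix.mulVec_mulVec, mul_sub, mul_one,
              Matrix.sub_mulVec, cPS.eq]
        _ = (Pn A s β.val * Sgeom (s β) (A β)).mulVec
              (((1 : Matrix (Fin n) (Fin n) K) - A α).mulVec (b β)) := by
            rw [Matrix.mulVec_mulVec]
        _ = (Pn A s β.val * Sgeom (s β) (A β)).mulVec
              (((1 : Matrix (Fin n) (Fin n) K) - A β).mulVec (b α)) := by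
            rw [hcompat α β]
        _ = ((Pn A s β.val * (Sgeom (s β) (A β) * (1 - A β)))).mulVec (b α) := by
            rw [Matrix.mulVec_mulVec, mul_assoc]
        _ = (Pn A s β.val - Pn A s (β.val + 1)).mulVec (b α) := by
            rw [Sgeom_mul_one_sub, mul_sub, mul_one, Pn_succ, dif_pos hβm]
    · -- β = α
      have hβα : β = α := Fin.eq_of_val_eq h
      subst hβα
      have hP : Pn A s' β.val = Pn A s β.val := by
        rw [hs', Pn_update hcomm s β β.val, if_neg (by omega)]
      have hsβ : s' β = s β + 1 := by simp [hs']
      have hWβ : W β = Pn A s β.val := by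
        simp [hW]
      have cP : Commute (A β) (Pn A s β.val) := commute_Pn hcomm β s β.val
      rw [hWβ, hP, hsβ, Sgeom_succ, mul_add, mul_one, Matrix.add_mulVec,
        Matrix.mulVec_mulVec]
      have h2 : Pn A s β.val * (A β * Sgeom (s β) (A β))
          = A β * (Pn A s β.val * Sgeom (s β) (A β)) := by
        rw [← mul_assoc, ← cP.eq, mul_assoc]
      rw [h2]
      abel
    · -- β > α
      have hP : Pn A s' β.val = A α * Pn A s β.val := by
        rw [hs', Pn_update hcomm s α β.val, if_pos h]
      have hsβ : s' β = s β := Function.update_of_ne (Fin.ne_of_val_ne (by omega)) _ _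
      have hWβ : W β = 0 := by
        have h2 : ¬ β = α := Fin.ne_of_val_ne (by omega)
        simp only [hW, if_neg (by omega : ¬ β.val < α.val), if_neg h2]
      rw [hWβ, Matrix.zero_mulVec, hP, hsβ, Matrix.mulVec_mulVec, mul_assoc]
      abel
  -- sum of W is 1
  have hWsum : ∑ β : Fin m, W β = 1 := by
    have hval : ∀ β : Fin m, W β = (fun j => if j < α.val then Pn A s j - Pn A s (j + 1)
        else if j = α.val then Pn A s α.val else 0) β.val := by
      intro β
      simp only [hW]
      by_cases h1 : β.val < α.val
      · rw [if_pos h1, if_pos h1]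
      · rw [if_neg h1, if_neg h1]
        by_cases h2 : β = α
        · rw [if_pos h2, if_pos (by rw [h2])]
        · rw [if_neg h2, if_neg (fun hh => h2 (Fin.eq_of_val_eq hh))]
    have hstep : ∑ β : Fin m, W β = ∑ j ∈ Finset.range m,
        (if j < α.val then Pn A s j - Pn A s (j + 1)
          else if j = α.val then Pn A s α.val else 0) := by
      rw [← Fin.sum_univ_eq_sum_range (fun j => if j < α.val then Pn A s j - Pn A s (j + 1)
          else if j = α.val then Pn A s α.val else 0) m]
      exact Finset.sum_congr rfl (fun β _ => hval β)
    rw [hstep]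
    have hsub : Finset.range (α.val + 1) ⊆ Finset.range m :=
      Finset.range_subset_range.mpr (by omega)
    rw [← Finset.sum_subset hsub ?_]
    · rw [Finset.sum_range_succ]
      have h1 : ∀ j ∈ Finset.range α.val,
          (if j < α.val then Pn A s j - Pn A s (j + 1)
            else if j = α.val then Pn A s α.val else 0)
          = Pn A s j - Pn A s (j + 1) := by
        intro j hj
        rw [if_pos (Finset.mem_range.mp hj)]
      rw [Finset.sum_congr rfl h1, Finset.sum_range_sub' (fun j => Pn A s j) α.val,
        if_neg (lt_irrefl _), if_pos rfl]
      have h3 : Pn A s 0 = 1 := by simp [Pn]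
      rw [h3]
      abel
    · intro j _ hj
      simp only [Finset.mem_range, not_lt] at hj
      rw [if_neg (by omega : ¬ j < α.val), if_neg (by omega : ¬ j = α.val)]
  -- assemble
  have hsum : ∑ β : Fin m, ((Pn A s' β.val) * Sgeom (s' β) (A β)).mulVec (b β)
      = ∑ β : Fin m, (A α).mulVec (((Pn A s β.val) * Sgeom (s β) (A β)).mulVec (b β))
        + b α := by
    have h4 : ∑ β : Fin m, ((Pn A s' β.val) * Sgeom (s' β) (A β)).mulVec (b β)
        - ∑ β : Fin m, (A α).mulVec (((Pn A s β.val) * Sgeom (s β) (A β)).mulVec (b β))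
        = b α := by
      rw [← Finset.sum_sub_distrib, Finset.sum_congr rfl (fun β _ => hD β),
        ← sum_mulVec, hWsum, Matrix.one_mulVec]
    exact sub_eq_iff_eq_add'.mp h4
  have hPm : Pn A s' m = A α * Pn A s m := by
    rw [hs', Pn_update hcomm s α m, if_pos α.isLt]
  unfold Gsol
  rw [Matrix.mulVec_add, mulVec_sum, hPm, ← Matrix.mulVec_mulVec, hsum]
  abel

lemma formula_eq' (h0 : 0 < m) (A : Fin m → Matrix (Fin n) (Fin n) K)
    (b : Fin m → Fin n → K) (x₀ : Fin n → K) (u : Fin m → ℕ) :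
    (((List.finRange m).map (fun α : Fin m => A α ^ u α)).prod).mulVec x₀
      + (Sgeom (u ⟨0, h0⟩) (A ⟨0, h0⟩)).mulVec (b ⟨0, h0⟩)
      + ∑ β ∈ Finset.univ.filter (fun β : Fin m => β ≠ ⟨0, h0⟩),
          (((((List.finRange m).filter (fun α : Fin m => α < β)).map
              (fun α : Fin m => A α ^ u α)).prod) * Sgeom (u β) (A β)).mulVec (b β)
      = Gsol A b x₀ u := by
  rw [Pn_full]
  have hterm : ∀ β ∈ Finset.univ.filter (fun β : Fin m => β ≠ ⟨0, h0⟩),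
      (((((List.finRange m).filter (fun α : Fin m => α < β)).map
          (fun α : Fin m => A α ^ u α)).prod) * Sgeom (u β) (A β)).mulVec (b β)
      = ((Pn A u β.val) * Sgeom (u β) (A β)).mulVec (b β) := by
    intro β _
    rw [Pn_filter]
  rw [Finset.sum_congr rfl hterm]
  unfold Gsol
  have hsplit : ∑ β : Fin m, ((Pn A u β.val) * Sgeom (u β) (A β)).mulVec (b β)
      = ((Pn A u (⟨0, h0⟩ : Fin m).val) * Sgeom (u ⟨0, h0⟩) (A ⟨0, h0⟩)).mulVec (b ⟨0, h0⟩)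
        + ∑ β ∈ Finset.univ.erase (⟨0, h0⟩ : Fin m),
            ((Pn A u β.val) * Sgeom (u β) (A β)).mulVec (b β) :=
    (Finset.add_sum_erase _ _ (Finset.mem_univ _)).symm
  rw [hsplit]
  have h1 : Pn A u (⟨0, h0⟩ : Fin m).val = 1 := by simp [Pn]
  have h2 : Finset.univ.filter (fun β : Fin m => β ≠ ⟨0, h0⟩)
      = Finset.univ.erase (⟨0, h0⟩ : Fin m) := Finset.filter_ne' _ _
  rw [h1, one_mul, h2, add_assoc]

lemma formula_eq (h0 : 0 < m) (A : Fin m → Matrix (Fin n) (Fin n) K)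
    (b : Fin m → Fin n → K) (x₀ : Fin n → K) (t t₀ : Fin m → ℤ) :
    (((List.finRange m).map
        (fun α : Fin m => A α ^ (t α - t₀ α).toNat)).prod).mulVec x₀
      + (Sgeom (t ⟨0, h0⟩ - t₀ ⟨0, h0⟩).toNat (A ⟨0, h0⟩)).mulVec (b ⟨0, h0⟩)
      + ∑ β ∈ Finset.univ.filter (fun β : Fin m => β ≠ ⟨0, h0⟩),
          (((((List.finRange m).filter (fun α : Fin m => α < β)).map
              (fun α : Fin m => A α ^ (t α - t₀ α).toNat)).prod)
            * Sgeom (t β - t₀ β).toNat (A β)).mulVec (b β)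
      = Gsol A b x₀ (fun γ => (t γ - t₀ γ).toNat) :=
  formula_eq' h0 A b x₀ (fun γ => (t γ - t₀ γ).toNat)

end AffineRecAux


/-- Theorem 11 of the paper, case `m ≥ 2`.
Let `A α` be pairwise commuting matrices and `b α` vectors with
`(1 - A α) *ᵥ b β = (1 - A β) *ᵥ b α`. Then the unique solution of the affine
recurrence `x (t + 1_α) = A α *ᵥ x t + b α` on `{t : t₀ ≤ t}` with
`x t₀ = x₀` is
`x t = (∏_{α=1}^m A_α^{t^α-t₀^α}) *ᵥ x₀ + S(t¹-t₀¹; A₁) *ᵥ b₁ +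
∑_{β=2}^m (∏_{α=1}^{β-1} A_α^{t^α-t₀^α}) · S(t^β-t₀^β; A_β) *ᵥ b_β`
(indices `0`-based below, products taken in increasing order of `α`):
a function `x` is such a solution iff it agrees with this formula on
`{t : t₀ ≤ t}`. -/
theorem affine_constant_recurrence_solution
    {m n : ℕ} (hm : 2 ≤ m) (hn : 1 ≤ n) {K : Type*} [Field K]
    (A : Fin m → Matrix (Fin n) (Fin n) K)
    (b : Fin m → (Fin n → K))
    (hcomm : ∀ α β : Fin m, A α * A β = A β * A α)
    (hcompat : ∀ α β : Fin m,
      ((1 : Matrix (Fin n) (Fin n) K) - A α).mulVec (b β)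
        = ((1 : Matrix (Fin n) (Fin n) K) - A β).mulVec (b α))
    (t₀ : Fin m → ℤ) (x₀ : Fin n → K) :
    ∀ x : (Fin m → ℤ) → (Fin n → K),
      (x t₀ = x₀ ∧
        ∀ t : Fin m → ℤ, t₀ ≤ t → ∀ α : Fin m,
          x (t + Pi.single α 1) = (A α).mulVec (x t) + b α) ↔
      (∀ t : Fin m → ℤ, t₀ ≤ t →
        x t =
          ((((List.finRange m).map
              (fun α : Fin m => A α ^ (t α - t₀ α).toNat)).prod).mulVec x₀)
          + (Sgeom (t ⟨0, by omega⟩ - t₀ ⟨0, by omega⟩).toNat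
              (A ⟨0, by omega⟩)).mulVec (b ⟨0, by omega⟩)
          + ∑ β ∈ Finset.univ.filter (fun β : Fin m => β ≠ ⟨0, by omega⟩),
              (((((List.finRange m).filter (fun α : Fin m => α < β)).map
                  (fun α : Fin m => A α ^ (t α - t₀ α).toNat)).prod)
                * Sgeom (t β - t₀ β).toNat (A β)).mulVec (b β)) := by
  have h0 : 0 < m := by omega
  intro x
  have hzero : (fun γ : Fin m => (t₀ γ - t₀ γ).toNat) = (fun _ => (0 : ℕ)) := by
    funext γ; simp
  have hconv : ∀ t : Fin m → ℤ, t₀ ≤ t → ∀ α : Fin m,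
      (fun γ : Fin m => (((t + Pi.single α 1 : Fin m → ℤ)) γ - t₀ γ).toNat)
        = Function.update (fun γ => (t γ - t₀ γ).toNat) α ((t α - t₀ α).toNat + 1) := by
    intro t ht α
    funext γ
    by_cases hγ : γ = α
    · subst hγ
      have h1 : t₀ γ ≤ t γ := ht γ
      rw [Function.update_self]
      simp only [Pi.add_apply, Pi.single_apply]
      simp only [if_pos trivial, eq_self_iff_true, if_true]
      omega
    · rw [Function.update_of_ne hγ]
      simp only [Pi.add_apply, Pi.single_apply, if_neg hγ]
      simp
  constructor
  · rintro ⟨hinit, hrec⟩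
    have key : ∀ N : ℕ, ∀ t : Fin m → ℤ, t₀ ≤ t →
        (∑ γ : Fin m, (t γ - t₀ γ).toNat) = N →
        x t = AffineRecAux.Gsol A b x₀ (fun γ => (t γ - t₀ γ).toNat) := by
      intro N
      induction N using Nat.strong_induction_on with
      | _ N ih =>
        intro t ht hN
        by_cases hz : ∀ γ, t γ = t₀ γ
        · have ht0 : t = t₀ := funext hz
          subst ht0
          rw [hzero, AffineRecAux.Gsol_zero, hinit]
        · push_neg at hz
          obtain ⟨α, hα⟩ := hz
          have hlt : t₀ α < t α := lt_of_le_of_ne (ht α) (Ne.symm hα)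
          set t' : Fin m → ℤ := t - Pi.single α 1 with ht'def
          have ht'le : t₀ ≤ t' := by
            intro γ
            have h1 : t₀ γ ≤ t γ := ht γ
            by_cases hγ : γ = α
            · subst hγ
              simp only [ht'def, Pi.sub_apply, Pi.single_apply, if_pos rfl]
              omega
            · simp only [ht'def, Pi.sub_apply, Pi.single_apply, if_neg hγ]
              omega
          have htt : t = t' + Pi.single α 1 := by
            funext γ
            simp only [ht'def, Pi.add_apply, Pi.sub_apply]
            ring
          have hNlt : (∑ γ : Fin m, (t' γ - t₀ γ).toNat) < N := by
            rw [← hN]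
            apply Finset.sum_lt_sum
            · intro γ _
              have h1 : t₀ γ ≤ t γ := ht γ
              by_cases hγ : γ = α
              · subst hγ
                simp only [ht'def, Pi.sub_apply, Pi.single_apply, if_pos rfl]
                omega
              · simp only [ht'def, Pi.sub_apply, Pi.single_apply, if_neg hγ]
                omega
            · refine ⟨α, Finset.mem_univ _, ?_⟩
              simp only [ht'def, Pi.sub_apply, Pi.single_apply]
              simp only [eq_self_iff_true, if_true]
              omega
          have hx' := ih _ hNlt t' ht'le rfl
          rw [htt, hrec t' ht'le α, hx', hconv t' ht'le α]
          exact (AffineRecAux.Gsol_step hcomm hcompat x₀ _ α).symm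
    intro t ht
    rw [AffineRecAux.formula_eq h0 A b x₀ t t₀]
    exact key _ t ht rfl
  · intro hform
    constructor
    · have h := hform t₀ le_rfl
      rw [AffineRecAux.formula_eq h0 A b x₀ t₀ t₀, hzero, AffineRecAux.Gsol_zero] at h
      exact h
    · intro t ht α
      have hble : t₀ ≤ t + Pi.single α 1 := by
        intro γ
        have h1 : t₀ γ ≤ t γ := ht γ
        by_cases hγ : γ = α
        · subst hγ
          simp only [Pi.add_apply, Pi.single_apply, if_pos rfl]
          omega
        · simp only [Pi.add_apply, Pi.single_apply, if_neg hγ]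
          omega
      have h1 := hform t ht
      rw [AffineRecAux.formula_eq h0 A b x₀ t t₀] at h1
      have h2 := hform _ hble
      rw [AffineRecAux.formula_eq h0 A b x₀ (t + Pi.single α 1) t₀] at h2
      rw [h1, h2, hconv t ht α]
      exact AffineRecAux.Gsol_step hcomm hcompat x₀ _ α
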